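/- Fix integers n ≥ 2, g ≥ 1, p ≥ 1. In the presented group G(n,g,p), set β = σ_{n−1}⋯σ_2σ_1²σ_2⋯σ_{n−1} and γ = σ_{n−1}⁻¹⋯σ_2⁻¹σ_1²σ_2⋯σ_{n−1}. Then for every 1 ≤ r ≤ g the following conjugation identities hold: a_rτ_1a_r⁻¹ = (βω_{2r−1}⁻¹)·γ·(βω_{2r−1}⁻¹)⁻¹ and b_rτ_1b_r⁻¹ = (βω_{2r}⁻¹)·γ·(βω_{2r}⁻¹)⁻¹. -/

import Mathlib

/-- The generators of the presentation of the braid group of a punctured genus-`g`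
surface: `s i` is `σ_{i+1}`, `a r` is `a_{r+1}`, `b r` is `b_{r+1}`, `z j` is `z_{j+1}`. -/
inductive GGen (n g p : ℕ) : Type
  | s : Fin (n - 1) → GGen n g p
  | a : Fin g → GGen n g p
  | b : Fin g → GGen n g p
  | z : Fin (p - 1) → GGen n g p

/-- `σ_{i+1}` as an element of the free group. -/
def sg {n g p : ℕ} (i : Fin (n - 1)) : FreeGroup (GGen n g p) := FreeGroup.of (GGen.s i)

/-- `hgen true r = a_{r+1}` and `hgen false r = b_{r+1}`. -/
def hgen {n g p : ℕ} (c : Bool) (r : Fin g) : FreeGroup (GGen n g p) :=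
  FreeGroup.of (if c then GGen.a r else GGen.b r)

/-- `z_{j+1}` as an element of the free group. -/
def zg {n g p : ℕ} (j : Fin (p - 1)) : FreeGroup (GGen n g p) := FreeGroup.of (GGen.z j)

/-- The relators of the presentation `G(n, g, p)` of the braid group on `n` strings of an
orientable `p`-punctured surface of genus `g` (Theorem 1.1).  A relation `u = v` is
encoded as the relator `u * v⁻¹`; relations involving `σ_1` are guarded by `0 < n - 1`,
i.e. by `n > 1`. -/
def gRels (n g p : ℕ) : Set (FreeGroup (GGen n g p)) :=
  {r | -- braid relations
      (∃ i j : Fin (n - 1), (i : ℕ) + 1 = (j : ℕ) ∧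
        r = sg i * sg j * sg i * (sg j * sg i * sg j)⁻¹)
    ∨ (∃ i j : Fin (n - 1), ((i : ℕ) + 2 ≤ (j : ℕ) ∨ (j : ℕ) + 2 ≤ (i : ℕ)) ∧
        r = sg i * sg j * (sg j * sg i)⁻¹)
    -- (R1)  a_r σ_i = σ_i a_r ,  b_r σ_i = σ_i b_r  (i ≠ 1)
    ∨ (∃ (c : Bool) (t : Fin g) (i : Fin (n - 1)), (i : ℕ) ≠ 0 ∧
        r = hgen c t * sg i * (sg i * hgen c t)⁻¹)
    -- (R2)  σ_1⁻¹ x σ_1⁻¹ x = x σ_1⁻¹ x σ_1⁻¹  for  x = a_r, b_r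
    ∨ (∃ (h : 0 < n - 1) (c : Bool) (t : Fin g),
        r = (sg ⟨0, h⟩)⁻¹ * hgen c t * (sg ⟨0, h⟩)⁻¹ * hgen c t *
          (hgen c t * (sg ⟨0, h⟩)⁻¹ * hgen c t * (sg ⟨0, h⟩)⁻¹)⁻¹)
    -- (R3)  σ_1⁻¹ x_s σ_1 y_r = y_r σ_1⁻¹ x_s σ_1  (s < r, x, y ∈ {a, b})
    ∨ (∃ (h : 0 < n - 1) (c d : Bool) (s t : Fin g), (s : ℕ) < (t : ℕ) ∧
        r = (sg ⟨0, h⟩)⁻¹ * hgen c s * sg ⟨0, h⟩ * hgen d t *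
          (hgen d t * (sg ⟨0, h⟩)⁻¹ * hgen c s * sg ⟨0, h⟩)⁻¹)
    -- (R4)  σ_1⁻¹ a_r σ_1⁻¹ b_r = b_r σ_1⁻¹ a_r σ_1
    ∨ (∃ (h : 0 < n - 1) (t : Fin g),
        r = (sg ⟨0, h⟩)⁻¹ * hgen true t * (sg ⟨0, h⟩)⁻¹ * hgen false t *
          (hgen false t * (sg ⟨0, h⟩)⁻¹ * hgen true t * sg ⟨0, h⟩)⁻¹)
    -- (R5)  z_j σ_i = σ_i z_j  (i ≠ 1)
    ∨ (∃ (i : Fin (n - 1)) (j : Fin (p - 1)), (i : ℕ) ≠ 0 ∧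
        r = zg j * sg i * (sg i * zg j)⁻¹)
    -- (R6)  σ_1⁻¹ z_j σ_1 x_t = x_t σ_1⁻¹ z_j σ_1  (x ∈ {a, b}, n > 1)
    ∨ (∃ (h : 0 < n - 1) (c : Bool) (t : Fin g) (j : Fin (p - 1)),
        r = (sg ⟨0, h⟩)⁻¹ * zg j * sg ⟨0, h⟩ * hgen c t *
          (hgen c t * (sg ⟨0, h⟩)⁻¹ * zg j * sg ⟨0, h⟩)⁻¹)
    -- (R7)  σ_1⁻¹ z_j σ_1 z_l = z_l σ_1⁻¹ z_j σ_1  (j < l)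
    ∨ (∃ (h : 0 < n - 1) (j l : Fin (p - 1)), (j : ℕ) < (l : ℕ) ∧
        r = (sg ⟨0, h⟩)⁻¹ * zg j * sg ⟨0, h⟩ * zg l *
          (zg l * (sg ⟨0, h⟩)⁻¹ * zg j * sg ⟨0, h⟩)⁻¹)
    -- (R8)  σ_1⁻¹ z_j σ_1⁻¹ z_j = z_j σ_1⁻¹ z_j σ_1⁻¹
    ∨ (∃ (h : 0 < n - 1) (j : Fin (p - 1)),
        r = (sg ⟨0, h⟩)⁻¹ * zg j * (sg ⟨0, h⟩)⁻¹ * zg j *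
          (zg j * (sg ⟨0, h⟩)⁻¹ * zg j * (sg ⟨0, h⟩)⁻¹)⁻¹)}

/-- The generator `σ_{i+1}` of `G(n,g,p)`. -/
def S {n g p : ℕ} (i : Fin (n - 1)) : PresentedGroup (gRels n g p) :=
  PresentedGroup.of (GGen.s i)

/-- The generator `a_{r+1}` of `G(n,g,p)`. -/
def A {n g p : ℕ} (r : Fin g) : PresentedGroup (gRels n g p) :=
  PresentedGroup.of (GGen.a r)

/-- The generator `b_{r+1}` of `G(n,g,p)`. -/
def B {n g p : ℕ} (r : Fin g) : PresentedGroup (gRels n g p) :=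
  PresentedGroup.of (GGen.b r)

/-- The generator `z_{j+1}` of `G(n,g,p)`. -/
def Z {n g p : ℕ} (j : Fin (p - 1)) : PresentedGroup (gRels n g p) :=
  PresentedGroup.of (GGen.z j)

/-- The descending product `σ_{n-1} σ_{n-2} ⋯ σ_{j+2}` (1-based indices), i.e. the product
of all `σ` with index strictly greater than that of `S j`, in decreasing order. -/
def descProd {n g p : ℕ} (j : Fin (n - 1)) : PresentedGroup (gRels n g p) :=
  ((List.ofFn fun i : Fin (n - 1) => if (j : ℕ) < (i : ℕ) then S i else 1).reverse).prod

/-- `τ_{j+1} = σ_{n-1} ⋯ σ_{j+2} σ_{j+1}² σ_{j+2}⁻¹ ⋯ σ_{n-1}⁻¹` (1-based indices). -/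
def tau {n g p : ℕ} (j : Fin (n - 1)) : PresentedGroup (gRels n g p) :=
  descProd j * (S j) ^ 2 * (descProd j)⁻¹

/-- The ascending product `σ_1 σ_2 ⋯ σ_{n-1}`. -/
def uProd (n g p : ℕ) : PresentedGroup (gRels n g p) :=
  (List.ofFn fun i : Fin (n - 1) => S i).prod

/-- `ω_{2r-1} = σ_{n-1}⁻¹ ⋯ σ_1⁻¹ a_r σ_1 ⋯ σ_{n-1}` (1-based index `r`). -/
def omegaA {n g p : ℕ} (r : Fin g) : PresentedGroup (gRels n g p) :=
  (uProd n g p)⁻¹ * A r * uProd n g p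

/-- `ω_{2r} = σ_{n-1}⁻¹ ⋯ σ_1⁻¹ b_r σ_1 ⋯ σ_{n-1}` (1-based index `r`). -/
def omegaB {n g p : ℕ} (r : Fin g) : PresentedGroup (gRels n g p) :=
  (uProd n g p)⁻¹ * B r * uProd n g p

/-- `ζ_j = σ_{n-1}⁻¹ ⋯ σ_1⁻¹ z_j σ_1 ⋯ σ_{n-1}` (1-based index `j`). -/
def zeta {n g p : ℕ} (j : Fin (p - 1)) : PresentedGroup (gRels n g p) :=
  (uProd n g p)⁻¹ * Z j * uProd n g p

/-- The list `[σ_2, σ_3, …, σ_{n-1}]` (with harmless `1`s in place of excluded entries). -/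
def tailList (n g p : ℕ) : List (PresentedGroup (gRels n g p)) :=
  List.ofFn fun i : Fin (n - 1) => if 0 < (i : ℕ) then S i else 1

/-- `β = σ_{n-1} ⋯ σ_2 σ_1² σ_2 ⋯ σ_{n-1}`. -/
def betaElt (n g p : ℕ) (h : 0 < n - 1) : PresentedGroup (gRels n g p) :=
  ((tailList n g p).reverse).prod * (S ⟨0, h⟩) ^ 2 * (tailList n g p).prod

/-- `γ = σ_{n-1}⁻¹ ⋯ σ_2⁻¹ σ_1² σ_2 ⋯ σ_{n-1}`. -/
def gammaElt (n g p : ℕ) (h : 0 < n - 1) : PresentedGroup (gRels n g p) :=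
  ((tailList n g p).prod)⁻¹ * (S ⟨0, h⟩) ^ 2 * (tailList n g p).prod

section Aux

/-- Relators are trivial in the presented group. -/
lemma mk_rel_eq_one {α : Type*} {rels : Set (FreeGroup α)} {x : FreeGroup α}
    (hx : x ∈ rels) : PresentedGroup.mk rels x = 1 := by
  have : x ∈ Subgroup.normalClosure rels := Subgroup.subset_normalClosure hx
  exact (QuotientGroup.eq_one_iff x).mpr this

/-- The surface generators commute with `σ_i` for `i ≠ 1`. -/
lemma hgen_comm_S {n g p : ℕ} (c : Bool) (t : Fin g) (i : Fin (n - 1))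
    (hi : (i : ℕ) ≠ 0) :
    PresentedGroup.mk (gRels n g p) (hgen c t) * S i =
      S i * PresentedGroup.mk (gRels n g p) (hgen c t) := by
  have hx : hgen c t * sg i * (sg i * hgen c t)⁻¹ ∈ gRels n g p := by
    refine Or.inr (Or.inr (Or.inl ⟨c, t, i, hi, rfl⟩))
  have h1 := mk_rel_eq_one hx
  rw [map_mul, map_inv, map_mul, mul_inv_eq_one] at h1
  exact h1

lemma key_calc {G : Type*} [Group G] (a s : G)
    (h : s⁻¹ * a * s⁻¹ * a = a * (s⁻¹ * a * s⁻¹)) :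
    a * s ^ 2 * a⁻¹ = s * a⁻¹ * s ^ 2 * a * s⁻¹ := by
  have hc : a⁻¹ * ((s⁻¹ * a) * (s⁻¹ * a)) = ((s⁻¹ * a) * (s⁻¹ * a)) * a⁻¹ := by
    have h' : ((s⁻¹ * a) * (s⁻¹ * a)) * a = a * ((s⁻¹ * a) * (s⁻¹ * a)) := by
      calc ((s⁻¹ * a) * (s⁻¹ * a)) * a = (s⁻¹ * a * s⁻¹ * a) * a := by group
        _ = (a * (s⁻¹ * a * s⁻¹)) * a := by rw [h]
        _ = a * ((s⁻¹ * a) * (s⁻¹ * a)) := by group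
    calc a⁻¹ * ((s⁻¹ * a) * (s⁻¹ * a))
        = a⁻¹ * (((s⁻¹ * a) * (s⁻¹ * a)) * a) * a⁻¹ := by group
      _ = a⁻¹ * (a * ((s⁻¹ * a) * (s⁻¹ * a))) * a⁻¹ := by rw [h']
      _ = ((s⁻¹ * a) * (s⁻¹ * a)) * a⁻¹ := by group
  have h2 : s⁻¹ * a * s⁻¹ * s⁻¹ * a⁻¹ = a⁻¹ * s⁻¹ * s⁻¹ * a * s⁻¹ := by
    calc s⁻¹ * a * s⁻¹ * s⁻¹ * a⁻¹
        = ((s⁻¹ * a) * (s⁻¹ * a)) * a⁻¹ * (s⁻¹ * a) * (a⁻¹ * a⁻¹) := by group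
      _ = a⁻¹ * ((s⁻¹ * a) * (s⁻¹ * a)) * (s⁻¹ * a) * (a⁻¹ * a⁻¹) := by rw [← hc]
      _ = a⁻¹ * (s⁻¹ * a) * (((s⁻¹ * a) * (s⁻¹ * a)) * a⁻¹) * a⁻¹ := by group
      _ = a⁻¹ * (s⁻¹ * a) * (a⁻¹ * ((s⁻¹ * a) * (s⁻¹ * a))) * a⁻¹ := by rw [← hc]
      _ = a⁻¹ * s⁻¹ * s⁻¹ * a * s⁻¹ := by group
  calc a * s ^ 2 * a⁻¹ = (s⁻¹ * a * s⁻¹ * s⁻¹ * a⁻¹)⁻¹ * s⁻¹ := by group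
    _ = (a⁻¹ * s⁻¹ * s⁻¹ * a * s⁻¹)⁻¹ * s⁻¹ := by rw [h2]
    _ = s * a⁻¹ * s ^ 2 * a * s⁻¹ := by group

lemma ofFn_prod_head {M : Type*} [Monoid M] :
    ∀ {m : ℕ} (f : Fin m → M) (h : 0 < m),
      (List.ofFn f).prod =
        f ⟨0, h⟩ * (List.ofFn fun i : Fin m => if 0 < (i : ℕ) then f i else 1).prod := by
  intro m f h
  match m, f, h with
  | (k + 1), f, _ =>
    rw [List.ofFn_succ, List.ofFn_succ, List.prod_cons, List.prod_cons]
    simp [Fin.succ]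

lemma comm_tail_prod {n g p : ℕ} (x : PresentedGroup (gRels n g p))
    (hx : ∀ i : Fin (n - 1), (i : ℕ) ≠ 0 → x * S i = S i * x)
    (l : List (PresentedGroup (gRels n g p)))
    (hl : ∀ y ∈ l, y ∈ tailList n g p) :
    Commute x l.prod := by
  refine Commute.list_prod_right _ _ fun y hy => ?_
  have := hl y hy
  rw [tailList, List.mem_ofFn] at this
  obtain ⟨i, rfl⟩ := this
  by_cases hi : 0 < (i : ℕ)
  · rw [if_pos hi]; exact hx i (by omega)
  · simp [hi]

end Aux

/-- **Conjugates of `τ_1` by the surface generators (Lemma 3.1):** in `G(n,g,p)`,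
`a_r τ_1 a_r⁻¹ = (β ω_{2r-1}⁻¹) γ (β ω_{2r-1}⁻¹)⁻¹` and
`b_r τ_1 b_r⁻¹ = (β ω_{2r}⁻¹) γ (β ω_{2r}⁻¹)⁻¹`. -/
theorem conj_tau_one (n g p : ℕ) (hn : 2 ≤ n) (hg : 1 ≤ g) (hp : 1 ≤ p)
    (h : 0 < n - 1) (r : Fin g) :
    A r * tau (⟨0, h⟩ : Fin (n - 1)) * (A r)⁻¹ =
      (betaElt n g p h * (omegaA r)⁻¹) * gammaElt n g p h *
        (betaElt n g p h * (omegaA r)⁻¹)⁻¹ ∧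
    B r * tau (⟨0, h⟩ : Fin (n - 1)) * (B r)⁻¹ =
      (betaElt n g p h * (omegaB r)⁻¹) * gammaElt n g p h *
        (betaElt n g p h * (omegaB r)⁻¹)⁻¹ := by

  -- abbreviations
  set s : PresentedGroup (gRels n g p) := S ⟨0, h⟩ with hs
  set R : PresentedGroup (gRels n g p) := ((tailList n g p).reverse).prod with hR
  set U : PresentedGroup (gRels n g p) := (tailList n g p).prod with hU
  have hdesc : descProd (⟨0, h⟩ : Fin (n - 1)) = R := rfl
  have huprod : uProd n g p = s * U := by
    rw [uProd, ofFn_prod_head (fun i : Fin (n - 1) => S i) h]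
    rfl
  have hcommS : ∀ (c : Bool) (t : Fin g) (i : Fin (n - 1)), (i : ℕ) ≠ 0 →
      PresentedGroup.mk (gRels n g p) (hgen c t) * S i =
        S i * PresentedGroup.mk (gRels n g p) (hgen c t) := hgen_comm_S
  have hArel : ∀ (c : Bool) (t : Fin g),
      s⁻¹ * PresentedGroup.mk (gRels n g p) (hgen c t) * s⁻¹ *
          PresentedGroup.mk (gRels n g p) (hgen c t) =
        PresentedGroup.mk (gRels n g p) (hgen c t) *
          (s⁻¹ * PresentedGroup.mk (gRels n g p) (hgen c t) * s⁻¹) := by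
    intro c t
    have hx : (sg ⟨0, h⟩)⁻¹ * hgen c t * (sg ⟨0, h⟩)⁻¹ * hgen c t *
        (hgen c t * (sg ⟨0, h⟩)⁻¹ * hgen c t * (sg ⟨0, h⟩)⁻¹)⁻¹ ∈ gRels n g p :=
      Or.inr (Or.inr (Or.inr (Or.inl ⟨h, c, t, rfl⟩)))
    have h1 := mk_rel_eq_one hx
    simp only [map_mul, map_inv, mul_inv_eq_one] at h1
    have : PresentedGroup.mk (gRels n g p) (sg (⟨0, h⟩ : Fin (n - 1))) = s := rfl
    rw [this] at h1
    rw [h1]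
    group
  -- the generic argument, for x = A r and x = B r
  have main : ∀ (c : Bool),
      let x := PresentedGroup.mk (gRels n g p) (hgen c r);
      x * tau (⟨0, h⟩ : Fin (n - 1)) * x⁻¹ =
        (betaElt n g p h * ((uProd n g p)⁻¹ * x * uProd n g p)⁻¹) * gammaElt n g p h *
          (betaElt n g p h * ((uProd n g p)⁻¹ * x * uProd n g p)⁻¹)⁻¹ := by
    intro c
    intro x
    have hcR : Commute x R := by
      refine comm_tail_prod x (hcommS c r) _ fun y hy => ?_
      exact (List.mem_reverse).mp hy
    have hcR' : R⁻¹ * x⁻¹ = x⁻¹ * R⁻¹ := by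
      have := (hcR.inv_left.inv_right).eq
      exact this.symm
    have hkey : x * s ^ 2 * x⁻¹ = s * x⁻¹ * s ^ 2 * x * s⁻¹ := key_calc x s (hArel c r)
    have htau : tau (⟨0, h⟩ : Fin (n - 1)) = R * s ^ 2 * R⁻¹ := rfl
    rw [htau, betaElt, gammaElt, huprod, ← hR, ← hU, ← hs]
    calc x * (R * s ^ 2 * R⁻¹) * x⁻¹
        = (x * R) * s ^ 2 * (R⁻¹ * x⁻¹) := by group
      _ = (R * x) * s ^ 2 * (x⁻¹ * R⁻¹) := by rw [hcR.eq, hcR']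
      _ = R * (x * s ^ 2 * x⁻¹) * R⁻¹ := by group
      _ = R * (s * x⁻¹ * s ^ 2 * x * s⁻¹) * R⁻¹ := by rw [hkey]
      _ = (R * s ^ 2 * U * ((s * U)⁻¹ * x * (s * U))⁻¹) * (U⁻¹ * s ^ 2 * U) *
            (R * s ^ 2 * U * ((s * U)⁻¹ * x * (s * U))⁻¹)⁻¹ := by group
  constructor
  · have hA : A r = PresentedGroup.mk (gRels n g p) (hgen true r) := rfl
    rw [hA, omegaA, hA]
    exact main true
  · have hB : B r = PresentedGroup.mk (gRels n g p) (hgen false r) := rfl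
    rw [hB, omegaB, hB]
    exact main false
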